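/- Let {X_n} be i.i.d., θ = sup{r ≥ 0 : E|X|^r < ∞} with θ < ∞, and θ̂_n = (log n)/(log max_{1≤k≤n}|X_k|). Then θ̂_n → θ in probability if and only if lim_{x→∞} x^r P(|X| > x) = ∞ for all r > θ. -/

import Mathlib

open MeasureTheory ProbabilityTheory Filter
open scoped ENNReal

/-- `log x = ln (e ∨ x)` as in the paper. -/
noncomputable def Log (x : ℝ) : ℝ := Real.log (max (Real.exp 1) x)

/-- `pmax X n ω = max_{1 ≤ k ≤ n} X_k(ω)` (indexed `0,…,n-1`), junk value at `n = 0`. -/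
noncomputable def pmax {Ω : Type*} (X : ℕ → Ω → ℝ) (n : ℕ) (ω : Ω) : ℝ :=
  if h : n = 0 then X 0 ω
  else (Finset.range n).sup' (Finset.nonempty_range_iff.mpr h) fun k => X k ω

lemma one_le_Log (x : ℝ) : 1 ≤ Log x := by
  have h1 : Real.exp 1 ≤ max (Real.exp 1) x := le_max_left _ _
  calc (1:ℝ) = Real.log (Real.exp 1) := (Real.log_exp 1).symm
    _ ≤ _ := Real.log_le_log (Real.exp_pos 1) h1

lemma Log_pos (x : ℝ) : 0 < Log x := lt_of_lt_of_le one_pos (one_le_Log x)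

lemma Log_mono {x y : ℝ} (h : x ≤ y) : Log x ≤ Log y :=
  Real.log_le_log (lt_max_of_lt_left (Real.exp_pos 1)) (max_le_max le_rfl h)

lemma exp_Log (x : ℝ) : Real.exp (Log x) = max (Real.exp 1) x :=
  Real.exp_log (lt_max_of_lt_left (Real.exp_pos 1))

lemma le_exp_Log (x : ℝ) : x ≤ Real.exp (Log x) := by
  rw [exp_Log]; exact le_max_right _ _

lemma Log_of_exp_le {x : ℝ} (h : Real.exp 1 ≤ x) : Log x = Real.log x := by
  rw [Log, max_eq_right h]

lemma log_le_Log {x : ℝ} (hx : 0 < x) : Real.log x ≤ Log x :=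
  Real.log_le_log hx (le_max_right _ _)

lemma tendsto_Log_atTop : Filter.Tendsto Log atTop atTop :=
  Real.tendsto_log_atTop.comp (tendsto_atTop_mono (fun x => le_max_right (Real.exp 1) x) tendsto_id)

lemma pmax_def {Ω : Type*} (X : ℕ → Ω → ℝ) {n : ℕ} (hn : n ≠ 0) (ω : Ω) :
    pmax X n ω = (Finset.range n).sup' (Finset.nonempty_range_iff.mpr hn) fun k => X k ω := by
  rw [pmax, dif_neg hn]

lemma le_pmax {Ω : Type*} (X : ℕ → Ω → ℝ) {n k : ℕ} (hk : k < n) (ω : Ω) :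
    X k ω ≤ pmax X n ω := by
  have hn : n ≠ 0 := by omega
  rw [pmax_def X hn ω]
  exact Finset.le_sup' (fun k => X k ω) (Finset.mem_range.mpr hk)

lemma pmax_le {Ω : Type*} {X : ℕ → Ω → ℝ} {n : ℕ} (hn : n ≠ 0) {ω : Ω} {x : ℝ}
    (h : ∀ k < n, X k ω ≤ x) : pmax X n ω ≤ x := by
  rw [pmax_def X hn ω]
  exact Finset.sup'_le _ _ fun k hk => h k (Finset.mem_range.mp hk)

lemma exists_le_of_le_pmax {Ω : Type*} {X : ℕ → Ω → ℝ} {n : ℕ} (hn : n ≠ 0) {ω : Ω} {x : ℝ}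
    (h : x ≤ pmax X n ω) : ∃ k < n, x ≤ X k ω := by
  rw [pmax_def X hn ω] at h
  obtain ⟨k, hk, hle⟩ := (Finset.le_sup'_iff _).mp h
  exact ⟨k, Finset.mem_range.mp hk, hle⟩

theorem stmt15 {Ω : Type*} [MeasurableSpace Ω] (μ : Measure Ω) [IsProbabilityMeasure μ]
    (X : ℕ → Ω → ℝ) (hmeas : ∀ n, Measurable (X n))
    (hindep : iIndepFun X μ)
    (hident : ∀ n, IdentDistrib (X n) (X 0) μ μ)
    (θ : ℝ)
    (hθ : ENNReal.ofReal θ = sSup (ENNReal.ofReal '' {r : ℝ | 0 ≤ r ∧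
        (∫⁻ ω, ENNReal.ofReal (|X 0 ω| ^ r) ∂μ) < ⊤})) (hθ0 : 0 ≤ θ) :
    (∀ ε : ℝ, 0 < ε →
        Tendsto (fun n : ℕ =>
          μ {ω | ε ≤ |Log n / Log (pmax (fun k ω' => |X k ω'|) n ω) - θ|}) atTop (nhds 0)) ↔
    (∀ r : ℝ, θ < r →
        Tendsto (fun x : ℝ => x ^ r * (μ {ω | |X 0 ω| > x}).toReal) atTop atTop) := by
  have hset : ∀ x : ℝ, MeasurableSet {y : ℝ | |y| ≤ x} := fun x =>
    measurableSet_le measurable_abs measurable_const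
  have hsetge : ∀ x : ℝ, MeasurableSet {y : ℝ | x ≤ |y|} := fun x =>
    measurableSet_le measurable_const measurable_abs
  have hident' : ∀ (k : ℕ) (s : Set ℝ), MeasurableSet s → μ (X k ⁻¹' s) = μ (X 0 ⁻¹' s) := by
    intro k s hs
    rw [← Measure.map_apply (hmeas k) hs, (hident k).map_eq, Measure.map_apply (hmeas 0) hs]
  have hprod : ∀ (n : ℕ) (x : ℝ), μ (⋂ k ∈ Finset.range n, X k ⁻¹' {y : ℝ | |y| ≤ x})
      = μ (X 0 ⁻¹' {y : ℝ | |y| ≤ x}) ^ n := by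
    intro n x
    rw [hindep.meas_biInter (fun i _ => ⟨{y : ℝ | |y| ≤ x}, hset x, rfl⟩),
      Finset.prod_congr rfl fun i _ => hident' i _ (hset x), Finset.prod_const,
      Finset.card_range]
  have hcompl : ∀ x : ℝ, μ (X 0 ⁻¹' {y : ℝ | |y| ≤ x}) = 1 - μ {ω | |X 0 ω| > x} := by
    intro x
    have h1 : {ω | |X 0 ω| > x} = (X 0 ⁻¹' {y : ℝ | |y| ≤ x})ᶜ := by
      ext ω; simp [Set.preimage, not_le]
    have h2 := prob_compl_eq_one_sub (μ := μ) ((hset x).preimage (hmeas 0))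
    rw [h1, h2, ENNReal.sub_sub_cancel ENNReal.one_ne_top (prob_le_one)]
  have hG1 : ∀ x : ℝ, (μ {ω | |X 0 ω| > x}).toReal ≤ 1 := by
    intro x
    have := prob_le_one (μ := μ) (s := {ω | |X 0 ω| > x})
    simpa using ENNReal.toReal_mono ENNReal.one_ne_top this
  have hmom : ∀ s : ℝ, 0 ≤ s → s < θ → (∫⁻ ω, ENNReal.ofReal (|X 0 ω| ^ s) ∂μ) < ⊤ := by
    intro s hs0 hsθ
    have hθpos : 0 < θ := lt_of_le_of_lt hs0 hsθ
    have h1 : ENNReal.ofReal s < ENNReal.ofReal θ :=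
      (ENNReal.ofReal_lt_ofReal_iff hθpos).mpr hsθ
    rw [hθ] at h1
    obtain ⟨b, hb, hlt⟩ := lt_sSup_iff.mp h1
    obtain ⟨t, ⟨ht0, htfin⟩, rfl⟩ := hb
    have hst : s ≤ t := by
      by_contra hc
      exact absurd hlt (not_lt.mpr (ENNReal.ofReal_le_ofReal (le_of_not_ge hc)))
    calc ∫⁻ ω, ENNReal.ofReal (|X 0 ω| ^ s) ∂μ
        ≤ ∫⁻ ω, (1 + ENNReal.ofReal (|X 0 ω| ^ t)) ∂μ := by
          apply lintegral_mono
          intro ω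
          rcases le_or_gt (|X 0 ω|) 1 with h | h
          · calc ENNReal.ofReal (|X 0 ω| ^ s) ≤ ENNReal.ofReal 1 :=
                ENNReal.ofReal_le_ofReal (Real.rpow_le_one (abs_nonneg _) h hs0)
              _ = 1 := ENNReal.ofReal_one
              _ ≤ _ := le_self_add
          · calc ENNReal.ofReal (|X 0 ω| ^ s) ≤ ENNReal.ofReal (|X 0 ω| ^ t) :=
                ENNReal.ofReal_le_ofReal (Real.rpow_le_rpow_of_exponent_le h.le hst)
              _ ≤ _ := le_add_self
      _ = 1 + ∫⁻ ω, ENNReal.ofReal (|X 0 ω| ^ t) ∂μ := by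
          rw [lintegral_add_left measurable_const, lintegral_one, measure_univ]
      _ < ⊤ := ENNReal.add_lt_top.mpr ⟨ENNReal.one_lt_top, htfin⟩
  have hmeaspow : ∀ s : ℝ, 0 ≤ s → Measurable fun ω => ENNReal.ofReal (|X 0 ω| ^ s) := by
    intro s hs
    exact ((Real.continuous_rpow_const hs).measurable.comp (hmeas 0).abs).ennreal_ofReal
  have hmarkov : ∀ s : ℝ, 0 < s → ∀ y : ℝ, 0 < y → μ {ω | y ≤ |X 0 ω|} ≤
      (∫⁻ ω, ENNReal.ofReal (|X 0 ω| ^ s) ∂μ) / ENNReal.ofReal (y ^ s) := by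
    intro s hs0 y hy
    have hmono : {ω | y ≤ |X 0 ω|} ⊆
        {ω | ENNReal.ofReal (y ^ s) ≤ ENNReal.ofReal (|X 0 ω| ^ s)} := fun ω h =>
      ENNReal.ofReal_le_ofReal (Real.rpow_le_rpow hy.le h hs0.le)
    refine (measure_mono hmono).trans ?_
    exact meas_ge_le_lintegral_div (hmeaspow s hs0.le).aemeasurable
      (ENNReal.ofReal_pos.mpr (Real.rpow_pos_of_pos hy s)).ne' ENNReal.ofReal_ne_top
  constructor
  · intro hconv r hr
    by_contra hnot
    have h1 : ∃ M, ∃ᶠ x : ℝ in atTop, x ^ r * (μ {ω | |X 0 ω| > x}).toReal < M := by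
      by_contra h
      push_neg at h
      apply hnot
      rw [tendsto_atTop]
      intro M
      have h2 := h M
      filter_upwards [h2] with x hx
      exact hx
    obtain ⟨M0, hM0⟩ := h1
    set M := max M0 1 with hMdef
    have hM1 : (1:ℝ) ≤ M := le_max_right _ _
    have hM' : ∃ᶠ x : ℝ in atTop, x ^ r * (μ {ω | |X 0 ω| > x}).toReal < M :=
      hM0.mono fun x hx => lt_of_lt_of_le hx (le_max_left _ _)
    set r' := (θ + r) / 2 with hr'
    have hθr' : θ < r' := by rw [hr']; linarith
    have hr'r : r' < r := by rw [hr']; linarith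
    have hr'0 : 0 < r' := lt_of_le_of_lt hθ0 hθr'
    set ε := r' - θ with hεdef
    have hε0 : 0 < ε := by rw [hεdef]; linarith
    have hev := (hconv ε hε0).eventually_lt_const
      (ENNReal.ofReal_pos.mpr (by norm_num : (0:ℝ) < 1/2))
    rw [eventually_atTop] at hev
    obtain ⟨N, hN⟩ := hev
    have hcond : ∀ᶠ x : ℝ in atTop, Real.exp 1 ≤ x ∧ (N : ℝ) ≤ x ^ r' ∧
        2 * M / x ^ (r - r') ≤ 1 / 2 := by
      refine (eventually_ge_atTop (Real.exp 1)).and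
        (((tendsto_rpow_atTop hr'0).eventually_ge_atTop (N : ℝ)).and ?_)
      filter_upwards [(tendsto_rpow_atTop (by linarith : (0:ℝ) < r - r')).eventually_ge_atTop
        (4 * M), eventually_gt_atTop (0:ℝ)] with x h4M hx0
      have hp : 0 < x ^ (r - r') := Real.rpow_pos_of_pos hx0 _
      rw [div_le_div_iff₀ hp (by norm_num : (0:ℝ) < 2)]
      linarith
    obtain ⟨x, hfx, hex, hNx, hhalf⟩ := (hM'.and_eventually hcond).exists
    have h1e : (1:ℝ) ≤ Real.exp 1 := by linarith [Real.add_one_le_exp 1]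
    have hx1 : (1:ℝ) ≤ x := le_trans h1e hex
    have hx0 : (0:ℝ) < x := lt_of_lt_of_le one_pos hx1
    set n := ⌈x ^ r'⌉₊ with hn
    have hxr'1 : (1:ℝ) ≤ x ^ r' := by
      calc (1:ℝ) = 1 ^ r' := (Real.one_rpow r').symm
        _ ≤ x ^ r' := Real.rpow_le_rpow zero_le_one hx1 hr'0.le
    have hn1 : 1 ≤ n := Nat.one_le_iff_ne_zero.mpr
      (Nat.pos_iff_ne_zero.mp (Nat.ceil_pos.mpr (lt_of_lt_of_le one_pos hxr'1)))
    have hn0 : n ≠ 0 := by omega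
    have hnN : N ≤ n := by
      have h2 : (N:ℝ) ≤ (n:ℝ) := le_trans hNx (Nat.le_ceil _)
      exact_mod_cast h2
    have hnlt := hN n hnN
    have hGnn : (0:ℝ) ≤ (μ {ω | |X 0 ω| > x}).toReal := ENNReal.toReal_nonneg
    have hGlt : (μ {ω | |X 0 ω| > x}).toReal < M / x ^ r := by
      rw [lt_div_iff₀ (Real.rpow_pos_of_pos hx0 r)]
      linarith [mul_comm (x ^ r) ((μ {ω | |X 0 ω| > x}).toReal)]
    have hnxr' : (n:ℝ) ≤ 2 * x ^ r' := by
      have h2 : (n:ℝ) < x ^ r' + 1 := Nat.ceil_lt_add_one (by positivity)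
      linarith
    have hnG : (n:ℝ) * (μ {ω | |X 0 ω| > x}).toReal ≤ 1/2 := by
      calc (n:ℝ) * (μ {ω | |X 0 ω| > x}).toReal ≤ (2 * x ^ r') * (M / x ^ r) :=
          mul_le_mul hnxr' hGlt.le hGnn (by positivity)
        _ = 2 * M / x ^ (r - r') := by
            rw [Real.rpow_sub hx0]
            have hxr : (0:ℝ) < x ^ r := Real.rpow_pos_of_pos hx0 r
            have hxr' : (0:ℝ) < x ^ r' := Real.rpow_pos_of_pos hx0 r'
            field_simp
        _ ≤ 1/2 := hhalf
    have hsub : (⋂ k ∈ Finset.range n, X k ⁻¹' {y : ℝ | |y| ≤ x}) ⊆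
        {ω | ε ≤ |Log n / Log (pmax (fun k ω' => |X k ω'|) n ω) - θ|} := by
      intro ω hω
      simp only [Set.mem_iInter, Finset.mem_range] at hω
      have hpm : pmax (fun k ω' => |X k ω'|) n ω ≤ x := pmax_le hn0 (fun k hk => hω k hk)
      have hLx : Log x = Real.log x := Log_of_exp_le hex
      have hLp : 0 < Log (pmax (fun k ω' => |X k ω'|) n ω) := Log_pos _
      have hLpx : Log (pmax (fun k ω' => |X k ω'|) n ω) ≤ Log x := Log_mono hpm
      have hlogn : r' * Log x ≤ Log n := by
        rw [hLx]
        have h2 : Real.log (x ^ r') ≤ Real.log n :=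
          Real.log_le_log (by positivity) (Nat.le_ceil _)
        rw [Real.log_rpow hx0] at h2
        have h3 : Real.log n ≤ Log n := log_le_Log (by exact_mod_cast hn1 : (0:ℝ) < (n:ℝ))
        linarith
      have hq : θ + ε ≤ Log n / Log (pmax (fun k ω' => |X k ω'|) n ω) := by
        rw [le_div_iff₀ hLp]
        have hθε2 : θ + ε = r' := by rw [hεdef]; ring
        rw [hθε2]
        calc r' * Log (pmax (fun k ω' => |X k ω'|) n ω) ≤ r' * Log x :=
            mul_le_mul_of_nonneg_left hLpx hr'0.le
          _ ≤ Log n := hlogn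
      simp only [Set.mem_setOf_eq]
      calc ε ≤ Log n / Log (pmax (fun k ω' => |X k ω'|) n ω) - θ := by linarith
        _ ≤ |Log n / Log (pmax (fun k ω' => |X k ω'|) n ω) - θ| := le_abs_self _
    have hlower : ENNReal.ofReal (1/2 : ℝ) ≤
        μ {ω | ε ≤ |Log n / Log (pmax (fun k ω' => |X k ω'|) n ω) - θ|} := by
      have h1 : μ (⋂ k ∈ Finset.range n, X k ⁻¹' {y : ℝ | |y| ≤ x}) =
          ENNReal.ofReal ((1 - (μ {ω | |X 0 ω| > x}).toReal) ^ n) := by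
        rw [hprod, hcompl, ENNReal.ofReal_pow (by linarith [hG1 x])]
        congr 1
        rw [ENNReal.ofReal_sub _ ENNReal.toReal_nonneg, ENNReal.ofReal_one,
          ENNReal.ofReal_toReal (measure_ne_top μ _)]
      refine le_trans ?_ ((h1 ▸ measure_mono hsub :))
      apply ENNReal.ofReal_le_ofReal
      have hber := one_add_mul_le_pow
        (by linarith [hG1 x] : (-2:ℝ) ≤ -(μ {ω | |X 0 ω| > x}).toReal) n
      rw [show (1:ℝ) + -(μ {ω | |X 0 ω| > x}).toReal = 1 - (μ {ω | |X 0 ω| > x}).toReal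
        by ring] at hber
      have : (1:ℝ) + (n:ℝ) * -(μ {ω | |X 0 ω| > x}).toReal =
          1 - (n:ℝ) * (μ {ω | |X 0 ω| > x}).toReal := by ring
      rw [this] at hber
      linarith
    exact absurd hnlt (not_lt.mpr hlower)
  · intro htail ε hε
    have hApart : Tendsto (fun n : ℕ =>
        μ {ω | θ + ε ≤ Log n / Log (pmax (fun k ω' => |X k ω'|) n ω)}) atTop (nhds 0) := by
      have hrpos : 0 < θ + ε := by linarith
      set x : ℕ → ℝ := fun n => Real.exp (Log n / (θ + ε)) with hx
      have hxr : ∀ n : ℕ, (x n) ^ (θ + ε) = max (Real.exp 1) (n : ℝ) := by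
        intro n
        rw [hx, ← Real.exp_mul, div_mul_cancel₀ _ hrpos.ne', exp_Log]
      have hxtop : Tendsto x atTop atTop :=
        Real.tendsto_exp_atTop.comp (Tendsto.atTop_div_const hrpos
          (tendsto_Log_atTop.comp tendsto_natCast_atTop_atTop))
      have hnG : Tendsto (fun n : ℕ => (n : ℝ) * (μ {ω | |X 0 ω| > x n}).toReal)
          atTop atTop := by
        have h1 : Tendsto (fun n : ℕ => (x n) ^ (θ + ε) * (μ {ω | |X 0 ω| > x n}).toReal)
            atTop atTop := (htail (θ + ε) (by linarith)).comp hxtop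
        apply h1.congr'
        filter_upwards [eventually_ge_atTop 3] with n hn
        rw [hxr n, max_eq_right]
        calc Real.exp 1 ≤ 3 := by
              calc Real.exp 1 ≤ 2.7182818286 := Real.exp_one_lt_d9.le
                _ ≤ 3 := by norm_num
          _ ≤ (n : ℝ) := by exact_mod_cast hn
      have hbound : ∀ᶠ n : ℕ in atTop,
          μ {ω | θ + ε ≤ Log n / Log (pmax (fun k ω' => |X k ω'|) n ω)} ≤
          ENNReal.ofReal (Real.exp (-((n : ℝ) * (μ {ω | |X 0 ω| > x n}).toReal))) := by
        filter_upwards [eventually_ge_atTop 1] with n hn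
        have hn0 : n ≠ 0 := by omega
        have hsub : {ω | θ + ε ≤ Log n / Log (pmax (fun k ω' => |X k ω'|) n ω)} ⊆
            ⋂ k ∈ Finset.range n, X k ⁻¹' {y : ℝ | |y| ≤ x n} := by
          intro ω hω
          simp only [Set.mem_iInter, Finset.mem_range]
          intro k hk
          have hLp : 0 < Log (pmax (fun k ω' => |X k ω'|) n ω) := Log_pos _
          have h2 : (θ + ε) * Log (pmax (fun k ω' => |X k ω'|) n ω) ≤ Log n :=
            (le_div_iff₀ hLp).mp hω
          have h3 : Log (pmax (fun k ω' => |X k ω'|) n ω) ≤ Log n / (θ + ε) := by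
            rw [le_div_iff₀ hrpos]
            linarith [mul_comm (θ + ε) (Log (pmax (fun k ω' => |X k ω'|) n ω))]
          have h4 : pmax (fun k ω' => |X k ω'|) n ω ≤ x n :=
            (le_exp_Log _).trans (Real.exp_le_exp.mpr h3)
          have h5 : |X k ω| ≤ pmax (fun k ω' => |X k ω'|) n ω :=
            le_pmax (fun k ω' => |X k ω'|) hk ω
          exact (h5.trans h4 : |X k ω| ≤ x n)
        have hG0 : (0:ℝ) ≤ (μ {ω | |X 0 ω| > x n}).toReal := ENNReal.toReal_nonneg
        have hG1' := hG1 (x n)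
        calc μ {ω | θ + ε ≤ Log n / Log (pmax (fun k ω' => |X k ω'|) n ω)}
            ≤ μ (⋂ k ∈ Finset.range n, X k ⁻¹' {y : ℝ | |y| ≤ x n}) := measure_mono hsub
          _ = (1 - μ {ω | |X 0 ω| > x n}) ^ n := by rw [hprod, hcompl]
          _ = ENNReal.ofReal ((1 - (μ {ω | |X 0 ω| > x n}).toReal) ^ n) := by
              rw [ENNReal.ofReal_pow (by linarith)]
              congr 1
              rw [ENNReal.ofReal_sub _ ENNReal.toReal_nonneg, ENNReal.ofReal_one,
                ENNReal.ofReal_toReal (measure_ne_top μ _)]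
          _ ≤ ENNReal.ofReal (Real.exp (-((n : ℝ) * (μ {ω | |X 0 ω| > x n}).toReal))) := by
              apply ENNReal.ofReal_le_ofReal
              calc (1 - (μ {ω | |X 0 ω| > x n}).toReal) ^ n
                  ≤ (Real.exp (-(μ {ω | |X 0 ω| > x n}).toReal)) ^ n := by
                    apply pow_le_pow_left₀ (by linarith)
                    linarith [Real.add_one_le_exp (-(μ {ω | |X 0 ω| > x n}).toReal)]
                _ = Real.exp (-((n : ℝ) * (μ {ω | |X 0 ω| > x n}).toReal)) := by
                    rw [← Real.exp_nat_mul]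
                    congr 1
                    ring
      have hexp : Tendsto (fun n : ℕ =>
          ENNReal.ofReal (Real.exp (-((n : ℝ) * (μ {ω | |X 0 ω| > x n}).toReal))))
          atTop (nhds 0) := by
        rw [← ENNReal.ofReal_zero]
        exact ENNReal.tendsto_ofReal
          (Real.tendsto_exp_atBot.comp (tendsto_neg_atTop_atBot.comp hnG))
      exact tendsto_of_tendsto_of_tendsto_of_le_of_le' tendsto_const_nhds hexp
        (Eventually.of_forall fun n => zero_le) hbound
    have hBpart : Tendsto (fun n : ℕ =>
        μ {ω | Log n / Log (pmax (fun k ω' => |X k ω'|) n ω) ≤ θ - ε}) atTop (nhds 0) := by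
      rcases le_or_gt θ ε with hθε | hθε
      · have hempty : ∀ n : ℕ, {ω | Log n / Log (pmax (fun k ω' => |X k ω'|) n ω) ≤ θ - ε} =
            (∅ : Set Ω) := by
          intro n
          ext ω
          simp only [Set.mem_setOf_eq, Set.mem_empty_iff_false, iff_false, not_le]
          calc θ - ε ≤ 0 := by linarith
            _ < Log n / Log (pmax (fun k ω' => |X k ω'|) n ω) :=
              div_pos (Log_pos _) (Log_pos _)
        simp only [hempty, measure_empty]
        exact tendsto_const_nhds
      · set s := θ - ε/2 with hs
        have hs0 : 0 < s := by rw [hs]; linarith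
        have hsθ : s < θ := by rw [hs]; linarith
        have hδ0 : 0 < θ - ε := by linarith
        set C := ∫⁻ ω, ENNReal.ofReal (|X 0 ω| ^ s) ∂μ with hC
        have hCfin : C ≠ ⊤ := (hmom s hs0.le hsθ).ne
        have hbound : ∀ᶠ n : ℕ in atTop,
            μ {ω | Log n / Log (pmax (fun k ω' => |X k ω'|) n ω) ≤ θ - ε} ≤
            ENNReal.ofReal ((n : ℝ) * C.toReal / Real.exp (Log n / (θ - ε) * s)) := by
          have hLogtop : Tendsto (fun n : ℕ => Log n) atTop atTop :=
            tendsto_Log_atTop.comp tendsto_natCast_atTop_atTop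
          filter_upwards [eventually_ge_atTop 1, hLogtop.eventually_ge_atTop (2 * (θ - ε))]
            with n hn1 hnL
          have hn0 : n ≠ 0 := by omega
          have hc1 : 1 < Log n / (θ - ε) := by
            rw [lt_div_iff₀ hδ0]
            linarith
          have hsub : {ω | Log n / Log (pmax (fun k ω' => |X k ω'|) n ω) ≤ θ - ε} ⊆
              ⋃ k ∈ Finset.range n, X k ⁻¹' {u : ℝ | Real.exp (Log n / (θ - ε)) ≤ |u|} := by
            intro ω hω
            have hLp : 0 < Log (pmax (fun k ω' => |X k ω'|) n ω) := Log_pos _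
            have h2 : Log n ≤ (θ - ε) * Log (pmax (fun k ω' => |X k ω'|) n ω) :=
              (div_le_iff₀ hLp).mp hω
            have h3 : Log n / (θ - ε) ≤ Log (pmax (fun k ω' => |X k ω'|) n ω) := by
              rw [div_le_iff₀ hδ0]
              linarith [mul_comm (θ - ε) (Log (pmax (fun k ω' => |X k ω'|) n ω))]
            have hmaxge : Real.exp (Log n / (θ - ε)) ≤
                Real.exp (Log (pmax (fun k ω' => |X k ω'|) n ω)) := Real.exp_le_exp.mpr h3
            have hyn_gt : Real.exp 1 < Real.exp (Log n / (θ - ε)) := Real.exp_lt_exp.mpr hc1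
            have hple : Real.exp (Log n / (θ - ε)) ≤ pmax (fun k ω' => |X k ω'|) n ω := by
              rw [exp_Log] at hmaxge
              rcases max_cases (Real.exp 1) (pmax (fun k ω' => |X k ω'|) n ω) with
                ⟨hmax, _⟩ | ⟨hmax, _⟩
              · rw [hmax] at hmaxge; linarith
              · rw [hmax] at hmaxge; exact hmaxge
            obtain ⟨k, hk, hky⟩ := exists_le_of_le_pmax hn0 hple
            simp only [Set.mem_iUnion, Finset.mem_range]
            exact ⟨k, hk, hky⟩
          calc μ {ω | Log n / Log (pmax (fun k ω' => |X k ω'|) n ω) ≤ θ - ε}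
              ≤ ∑ k ∈ Finset.range n,
                μ (X k ⁻¹' {u : ℝ | Real.exp (Log n / (θ - ε)) ≤ |u|}) :=
              (measure_mono hsub).trans (measure_biUnion_finset_le _ _)
            _ = n * μ (X 0 ⁻¹' {u : ℝ | Real.exp (Log n / (θ - ε)) ≤ |u|}) := by
                rw [Finset.sum_congr rfl fun k _ => hident' k _ (hsetge _), Finset.sum_const,
                  Finset.card_range, nsmul_eq_mul]
            _ ≤ n * (C / ENNReal.ofReal (Real.exp (Log n / (θ - ε)) ^ s)) := by
                gcongr
                exact hmarkov s hs0 _ (Real.exp_pos _)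
            _ = ENNReal.ofReal ((n : ℝ) * C.toReal / Real.exp (Log n / (θ - ε)) ^ s) := by
                rw [ENNReal.ofReal_div_of_pos (Real.rpow_pos_of_pos (Real.exp_pos _) s),
                  ENNReal.ofReal_mul (by positivity), ENNReal.ofReal_natCast,
                  ENNReal.ofReal_toReal hCfin, mul_div_assoc]
            _ = ENNReal.ofReal ((n : ℝ) * C.toReal / Real.exp (Log n / (θ - ε) * s)) := by
                rw [← Real.exp_mul]
        have hqd : 1 < s / (θ - ε) := by
          rw [lt_div_iff₀ hδ0, hs]
          linarith
        have hreal : Tendsto (fun n : ℕ => (n : ℝ) * C.toReal / Real.exp (Log n / (θ - ε) * s))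
            atTop (nhds 0) := by
          have h2 : Tendsto (fun n : ℕ => (1 - s / (θ - ε)) * Real.log n) atTop atBot := by
            apply Tendsto.neg_mul_atTop (C := 1 - s / (θ - ε)) (by linarith) tendsto_const_nhds
            exact Real.tendsto_log_atTop.comp tendsto_natCast_atTop_atTop
          have h1 : Tendsto (fun n : ℕ => C.toReal * Real.exp ((1 - s / (θ - ε)) * Real.log n))
              atTop (nhds 0) := by
            have := (Real.tendsto_exp_atBot.comp h2).const_mul C.toReal
            simpa using this
          apply h1.congr'
          filter_upwards [eventually_ge_atTop 3] with n hn
          have hn0 : (0:ℝ) < n := by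
            have : (3:ℝ) ≤ n := by exact_mod_cast hn
            linarith
          have hLog : Log n = Real.log n := by
            apply Log_of_exp_le
            calc Real.exp 1 ≤ 2.7182818286 := Real.exp_one_lt_d9.le
              _ ≤ 3 := by norm_num
              _ ≤ (n : ℝ) := by exact_mod_cast hn
          rw [hLog]
          have hexp : Real.exp ((1 - s / (θ - ε)) * Real.log n) =
              (n : ℝ) / Real.exp (Real.log n / (θ - ε) * s) := by
            rw [show (1 - s / (θ - ε)) * Real.log n =
              Real.log n - Real.log n / (θ - ε) * s by field_simp,
              Real.exp_sub, Real.exp_log hn0]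
          rw [hexp]
          ring
        refine tendsto_of_tendsto_of_tendsto_of_le_of_le' tendsto_const_nhds ?_
          (Eventually.of_forall fun n => zero_le) hbound
        rw [← ENNReal.ofReal_zero]
        exact ENNReal.tendsto_ofReal hreal
    have hfinal : Tendsto (fun n : ℕ =>
        μ {ω | θ + ε ≤ Log n / Log (pmax (fun k ω' => |X k ω'|) n ω)} +
        μ {ω | Log n / Log (pmax (fun k ω' => |X k ω'|) n ω) ≤ θ - ε}) atTop (nhds 0) := by
      have := hApart.add hBpart
      simpa using this
    refine tendsto_of_tendsto_of_tendsto_of_le_of_le' tendsto_const_nhds hfinal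
      (Eventually.of_forall fun n => zero_le) (Eventually.of_forall fun n => ?_)
    refine (measure_mono ?_).trans (measure_union_le _ _)
    intro ω hω
    simp only [Set.mem_setOf_eq] at hω
    rcases le_abs.mp hω with h | h
    · exact Or.inl (by simp only [Set.mem_setOf_eq]; linarith)
    · exact Or.inr (by simp only [Set.mem_setOf_eq]; linarith)
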